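/- Let X be a real normed space identified as the dual of a normed space ^*X, and let S ⊆ X be a subspace satisfying (^⊥S)^⊥ = S. Then for every y ∈ X: min_{x∈S} ‖y−x‖ = sup{⟨ν,y⟩ : ν ∈ ^⊥S, ‖ν‖ ≤ 1}, and the minimum is attained. -/

import Mathlib

/-- For `X` the dual of `V = ^*X` and a subspace `S ⊆ X` with `(^⊥S)^⊥ = S`, the
predual duality formula holds for every `y`: `min_{x∈S} ‖y−x‖ = sup {⟨ν,y⟩ :
ν ∈ ^⊥S, ‖ν‖ ≤ 1}`, the minimum being attained. -/
theorem predual_duality_of_ann_preann_eq (V : Type*) [NormedAddCommGroup V] [NormedSpace ℝ V]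
    (S : Submodule ℝ (V →L[ℝ] ℝ))
    (hS : {x : V →L[ℝ] ℝ | ∀ ν ∈ {ν : V | ∀ s ∈ S, s ν = 0}, x ν = 0}
            = (S : Set (V →L[ℝ] ℝ)))
    (y : V →L[ℝ] ℝ) :
    ∃ x₀ ∈ S,
      ‖y - x₀‖ = sSup {r : ℝ | ∃ ν ∈ {ν : V | ∀ s ∈ S, s ν = 0}, ‖ν‖ ≤ 1 ∧ r = y ν}
      ∧ ∀ x ∈ S, ‖y - x₀‖ ≤ ‖y - x‖ := by
  classical
  -- the preannihilator as a submodule of V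
  set N : Submodule ℝ V :=
    { carrier := {ν : V | ∀ s ∈ S, s ν = 0}
      add_mem' := by
        intro a b ha hb s hs
        simp [map_add, ha s hs, hb s hs]
      zero_mem' := by intro s hs; simp
      smul_mem' := by
        intro c a ha s hs
        simp [map_smul, ha s hs] } with hN
  have hNmem : ∀ ν : V, ν ∈ N ↔ ∀ s ∈ S, s ν = 0 := fun ν => Iff.rfl
  set T : Set ℝ := {r : ℝ | ∃ ν ∈ {ν : V | ∀ s ∈ S, s ν = 0}, ‖ν‖ ≤ 1 ∧ r = y ν} with hT
  -- restriction of y to N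
  set f : N →L[ℝ] ℝ := y.comp N.subtypeL with hf
  have hfval : ∀ ν : N, f ν = y (ν : V) := fun ν => rfl
  -- T facts
  have hT0 : (0 : ℝ) ∈ T := ⟨0, fun s _ => by simp, by simp⟩
  have hTbdd : ∀ r ∈ T, r ≤ ‖f‖ := by
    rintro r ⟨ν, hν, hν1, rfl⟩
    have : y ν = f ⟨ν, hν⟩ := rfl
    rw [this]
    calc f ⟨ν, hν⟩ ≤ ‖f ⟨ν, hν⟩‖ := le_abs_self _
    _ ≤ ‖f‖ * ‖(⟨ν, hν⟩ : N)‖ := f.le_opNorm _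
    _ ≤ ‖f‖ * 1 := by
        exact mul_le_mul_of_nonneg_left hν1 (norm_nonneg f)
    _ = ‖f‖ := mul_one _
  have hTne : T.Nonempty := ⟨0, hT0⟩
  have hTbdd' : BddAbove T := ⟨‖f‖, fun r hr => hTbdd r hr⟩
  have hsSup0 : 0 ≤ sSup T := le_csSup hTbdd' hT0
  -- ‖f‖ ≤ sSup T
  have hfle : ‖f‖ ≤ sSup T := by
    apply f.opNorm_le_bound hsSup0
    intro x
    rcases eq_or_ne x 0 with rfl | hx
    · simp
    · have hxn : (0:ℝ) < ‖x‖ := norm_pos_iff.mpr hx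
      have key : ∀ ε : ℝ, ε = 1 ∨ ε = -1 → ε * y (x : V) ≤ sSup T * ‖x‖ := by
        intro ε hε
        have hmem : (‖x‖⁻¹ * ε) • (x : V) ∈ {ν : V | ∀ s ∈ S, s ν = 0} := by
          intro s hs
          have := x.2 s hs
          simp [map_smul, this]
        have hnorm : ‖(‖x‖⁻¹ * ε) • (x : V)‖ ≤ 1 := by
          rw [norm_smul]
          have : |ε| = 1 := by rcases hε with rfl | rfl <;> simp
          simp only [Real.norm_eq_abs, abs_mul, this, mul_one,
            abs_of_pos (inv_pos.mpr hxn)]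
          rw [inv_mul_le_iff₀ hxn]
          simp
        have hmemT : y ((‖x‖⁻¹ * ε) • (x : V)) ∈ T :=
          ⟨_, hmem, hnorm, rfl⟩
        have hle : y ((‖x‖⁻¹ * ε) • (x : V)) ≤ sSup T := le_csSup hTbdd' hmemT
        have : y ((‖x‖⁻¹ * ε) • (x : V)) = ‖x‖⁻¹ * (ε * y (x : V)) := by
          rw [map_smul]
          ring_nf
        rw [this] at hle
        calc ε * y (x : V) = ‖x‖ * (‖x‖⁻¹ * (ε * y (x : V))) := by
              rw [← mul_assoc, mul_inv_cancel₀ hxn.ne', one_mul]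
          _ ≤ ‖x‖ * sSup T := mul_le_mul_of_nonneg_left hle (le_of_lt hxn)
          _ = sSup T * ‖x‖ := mul_comm _ _
      have h1 := key 1 (Or.inl rfl)
      have h2 := key (-1) (Or.inr rfl)
      rw [hfval, Real.norm_eq_abs, abs_le]
      constructor
      · linarith
      · linarith
  have hfnorm : ‖f‖ = sSup T := le_antisymm hfle (csSup_le hTne hTbdd)
  -- Hahn–Banach extension
  obtain ⟨g, hg, hgnorm⟩ := exists_extension_norm_eq N f
  refine ⟨y - g, ?_, ?_, ?_⟩
  · -- y - g ∈ S via hS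
    have : (y - g) ∈ {x : V →L[ℝ] ℝ | ∀ ν ∈ {ν : V | ∀ s ∈ S, s ν = 0}, x ν = 0} := by
      intro ν hν
      have : g ν = f ⟨ν, hν⟩ := hg ⟨ν, hν⟩
      simp [ContinuousLinearMap.sub_apply, this, hfval]
    rw [hS] at this
    exact this
  · simpa [hfnorm] using hgnorm
  · intro x hx
    have hnx : ‖y - (y - g)‖ = sSup T := by simpa [hfnorm] using hgnorm
    rw [hnx]
    apply csSup_le hTne
    rintro r ⟨ν, hν, hν1, rfl⟩
    have hxν : x ν = 0 := hν x hx
    calc y ν = (y - x) ν := by simp [ContinuousLinearMap.sub_apply, hxν]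
      _ ≤ ‖(y - x) ν‖ := le_abs_self _
      _ ≤ ‖y - x‖ * ‖ν‖ := (y - x).le_opNorm ν
      _ ≤ ‖y - x‖ * 1 := mul_le_mul_of_nonneg_left hν1 (norm_nonneg _)
      _ = ‖y - x‖ := mul_one _
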